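/- For histogram models: let m be a regular partition of ℝ with μ(λ) = 1/d_m for all λ ∈ m, and m' a subpartition of m, with ψ_λ = μ(λ)^{−1/2} 1_λ. Then β(Λ_m, Λ_{m'}) = ∑_{λ∈m, λ'∈m'} (E[(ψ_λ(ξ_1)−Pψ_λ)(ψ_{λ'}(ξ_1)−Pψ_{λ'})])² = d_m‖s_{m'}‖² − 2P(s_m s_{m'}) + ‖s_m‖²‖s_{m'}‖². -/

import Mathlib

open MeasureTheory

lemma measurable_of_partition {Λ : Type*} [Countable Λ] {A : Λ → Set ℝ}
    (hA : ∀ l, MeasurableSet (A l)) (hcover : (⋃ l, A l) = Set.univ)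
    {f : ℝ → ℝ} {g : Λ → ℝ} (h : ∀ l, ∀ x ∈ A l, f x = g l) : Measurable f := by
  intro t ht
  have : f ⁻¹' t = ⋃ l : {l // g l ∈ t}, A l.1 := by
    ext x
    obtain ⟨l, hl⟩ : ∃ l, x ∈ A l := Set.mem_iUnion.1 (hcover ▸ Set.mem_univ x)
    simp only [Set.mem_preimage, Set.mem_iUnion]
    constructor
    · intro hx; exact ⟨⟨l, (h l x hl) ▸ hx⟩, hl⟩
    · rintro ⟨⟨l₂, hl₂⟩, hx⟩; rw [h l₂ x hx]; exact hl₂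
  rw [this]; exact MeasurableSet.iUnion fun l => hA l.1

lemma indicator_key (t : Set ℝ) (ht : MeasurableSet t) (r : ℝ) (f : ℝ → ℝ)
    : ∫ x, (r * t.indicator (fun _ => (1:ℝ)) x) * f x = r * ∫ x in t, f x := by
  have h1 : (fun x => (r * t.indicator (fun _ => (1:ℝ)) x) * f x)
      = fun x => r * t.indicator f x := by
    ext x; by_cases hx : x ∈ t <;> simp [hx]
  rw [h1, integral_const_mul, integral_indicator ht]



set_option maxHeartbeats 2000000 in
/-- Histogram case: `m = (A l)` is a regular partition of `ℝ` with cells of Lebesgue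
measure `1/d`, `m' = (A' l')` a subpartition of `m`, `ψ_λ = μ(λ)^{−1/2} 1_λ`, and
`ξ₁` has density `s`.  Then
`β(Λ_m, Λ_{m'}) = ∑_{λ,λ'} (E[(ψ_λ(ξ₁)−Pψ_λ)(ψ_{λ'}(ξ₁)−Pψ_{λ'})])²
  = d ‖s_{m'}‖² − 2 P(s_m s_{m'}) + ‖s_m‖² ‖s_{m'}‖²`. -/
theorem stmt14 {Λ Λ' : Type*} [Countable Λ] [Countable Λ']
    (A : Λ → Set ℝ) (A' : Λ' → Set ℝ)
    (hA : ∀ l, MeasurableSet (A l)) (hA' : ∀ l, MeasurableSet (A' l))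
    (hdisj : Pairwise (Function.onFun Disjoint A))
    (hdisj' : Pairwise (Function.onFun Disjoint A'))
    (hcover : (⋃ l, A l) = Set.univ) (hcover' : (⋃ l, A' l) = Set.univ)
    (hrefine : ∀ l', ∃ l, A' l' ⊆ A l)
    (d : ℕ) (hd : 0 < d)
    (hvol : ∀ l, MeasureTheory.volume (A l) = (d : ENNReal)⁻¹)
    (hvol' : ∀ l', 0 < MeasureTheory.volume (A' l') ∧ MeasureTheory.volume (A' l') < ⊤)
    (s : ℝ → ℝ) (hs0 : 0 ≤ s) (hsI : Integrable s) (hs1 : (∫ x, s x) = 1)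
    (hsb : MemLp s ⊤ volume) :
    let ψ : Λ → ℝ → ℝ := fun l x =>
      Real.sqrt d * (A l).indicator (fun _ => (1 : ℝ)) x
    let ψ' : Λ' → ℝ → ℝ := fun l x =>
      Real.sqrt ((MeasureTheory.volume (A' l)).toReal)⁻¹ *
        (A' l).indicator (fun _ => (1 : ℝ)) x
    let c : Λ → ℝ := fun l => ∫ x, ψ l x * s x
    let c' : Λ' → ℝ := fun l => ∫ x, ψ' l x * s x
    let sm : ℝ → ℝ := fun x => ∑' l, c l * ψ l x
    let sm' : ℝ → ℝ := fun x => ∑' l, c' l * ψ' l x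
    (∑' p : Λ × Λ', (∫ x, (ψ p.1 x - c p.1) * (ψ' p.2 x - c' p.2) * s x) ^ 2)
      = d * (∑' l, (c' l) ^ 2) - 2 * (∫ x, sm x * sm' x * s x)
        + (∑' l, (c l) ^ 2) * (∑' l, (c' l) ^ 2) := by
  intro ψ ψ' c c' sm sm'
  classical
  -- basic constants and notation
  set C : ℝ := (eLpNormEssSup s volume).toReal with hCdef
  have hC0 : 0 ≤ C := ENNReal.toReal_nonneg
  have hsae : ∀ᵐ x, s x ≤ C := by
    have h1 := enorm_ae_le_eLpNormEssSup s volume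
    have htop : eLpNormEssSup s volume < ⊤ := by
      have := hsb.2; rwa [eLpNorm_exponent_top] at this
    filter_upwards [h1] with x hx
    have : ‖s x‖ ≤ C := by
      have h2 := ENNReal.toReal_mono htop.ne hx
      simpa using h2
    calc s x ≤ ‖s x‖ := le_abs_self _
    _ ≤ C := this
  have hdR : (0:ℝ) < d := Nat.cast_pos.2 hd
  have hsqd : Real.sqrt d * Real.sqrt d = (d:ℝ) := Real.mul_self_sqrt hdR.le
  -- e, e', v'
  set e : Λ → ℝ := fun l => ∫ x in A l, s x with hedef
  set e' : Λ' → ℝ := fun l' => ∫ x in A' l', s x with he'def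
  set v' : Λ' → ℝ := fun l' => (volume (A' l')).toReal with hv'def
  have hv'pos : ∀ l', 0 < v' l' := fun l' =>
    ENNReal.toReal_pos (hvol' l').1.ne' (hvol' l').2.ne
  have hvolR : ∀ l, (volume (A l)).toReal = (d:ℝ)⁻¹ := by
    intro l; rw [hvol l, ← ENNReal.ofReal_natCast, ← ENNReal.ofReal_inv_of_pos hdR,
      ENNReal.toReal_ofReal (by positivity)]
  -- values of c and c'
  have hce : ∀ l, c l = Real.sqrt d * e l := fun l => indicator_key (A l) (hA l) _ s
  have hc'e : ∀ l', c' l' = Real.sqrt (v' l')⁻¹ * e' l' := fun l' =>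
    indicator_key (A' l') (hA' l') _ s
  -- nonnegativity and bounds
  have he0 : ∀ l, 0 ≤ e l := fun l => setIntegral_nonneg (hA l) fun x _ => hs0 x
  have he'0 : ∀ l', 0 ≤ e' l' := fun l' => setIntegral_nonneg (hA' l') fun x _ => hs0 x
  have hc0 : ∀ l, 0 ≤ c l := fun l => by
    rw [hce l]; exact mul_nonneg (Real.sqrt_nonneg _) (he0 l)
  have hc'0 : ∀ l', 0 ≤ c' l' := fun l' => by
    rw [hc'e l']; exact mul_nonneg (Real.sqrt_nonneg _) (he'0 l')
  have heC : ∀ l, e l ≤ (d:ℝ)⁻¹ * C := by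
    intro l
    have : e l ≤ ∫ _ in A l, C := by
      refine setIntegral_mono_ae hsI.integrableOn ?_ hsae
      exact integrableOn_const (by rw [hvol l]; exact (ENNReal.inv_lt_top.2 (by exact_mod_cast hd)).ne)
    calc e l ≤ ∫ _ in A l, C := this
    _ = (d:ℝ)⁻¹ * C := by rw [setIntegral_const, measureReal_def, hvolR l, smul_eq_mul]
  have he'C : ∀ l', e' l' ≤ v' l' * C := by
    intro l'
    have : e' l' ≤ ∫ _ in A' l', C := by
      refine setIntegral_mono_ae hsI.integrableOn ?_ hsae
      exact integrableOn_const (hvol' l').2.ne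
    calc e' l' ≤ ∫ _ in A' l', C := this
    _ = v' l' * C := by rw [setIntegral_const, measureReal_def, smul_eq_mul]
  have hde : ∀ l, (d:ℝ) * e l ≤ C := by
    intro l
    have h2 := mul_le_mul_of_nonneg_left (heC l) hdR.le
    rwa [← mul_assoc, mul_inv_cancel₀ hdR.ne', one_mul] at h2
  have hin : ∀ l', (v' l')⁻¹ * e' l' ≤ C := by
    intro l'
    have h2 := mul_le_mul_of_nonneg_left (he'C l') (inv_nonneg.2 (hv'pos l').le)
    rwa [← mul_assoc, inv_mul_cancel₀ (hv'pos l').ne', one_mul] at h2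
  -- summability of squares
  have hSe : Summable e := ⟨_, hasSum_integral_iUnion hA hdisj
    (by rw [hcover]; exact hsI.integrableOn)⟩
  have hSe' : Summable e' := ⟨_, hasSum_integral_iUnion hA' hdisj'
    (by rw [hcover']; exact hsI.integrableOn)⟩
  have hc2le : ∀ l, c l ^ 2 ≤ C * e l := by
    intro l
    have h2 := mul_le_mul_of_nonneg_right (hde l) (he0 l)
    rw [hce l]
    calc (Real.sqrt d * e l) ^ 2 = ((d:ℝ) * e l) * e l := by
          rw [mul_pow, Real.sq_sqrt hdR.le]; ring
    _ ≤ C * e l := h2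
  have hc'2le : ∀ l', c' l' ^ 2 ≤ C * e' l' := by
    intro l'
    have h2 := mul_le_mul_of_nonneg_right (hin l') (he'0 l')
    rw [hc'e l']
    calc (Real.sqrt (v' l')⁻¹ * e' l') ^ 2 = ((v' l')⁻¹ * e' l') * e' l' := by
          rw [mul_pow, Real.sq_sqrt (inv_nonneg.2 (hv'pos l').le)]; ring
    _ ≤ C * e' l' := h2
  have hSc2 : Summable (fun l => c l ^ 2) :=
    Summable.of_nonneg_of_le (fun l => sq_nonneg _) hc2le (hSe.mul_left C)
  have hSc'2 : Summable (fun l' => c' l' ^ 2) :=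
    Summable.of_nonneg_of_le (fun l' => sq_nonneg _) hc'2le (hSe'.mul_left C)
  -- bounds for sm, sm'
  have hcC : ∀ l, Real.sqrt d * c l ≤ C := by
    intro l; rw [hce l, ← mul_assoc, hsqd]; exact hde l
  have hc'C : ∀ l', Real.sqrt (v' l')⁻¹ * c' l' ≤ C := by
    intro l'
    rw [hc'e l', ← mul_assoc, Real.mul_self_sqrt (inv_nonneg.2 (hv'pos l').le)]
    exact hin l'
  -- uniqueness of cells
  have huA : ∀ x l, x ∈ A l → ∀ l₂, l₂ ≠ l → x ∉ A l₂ := fun x l hx l₂ hne hx₂ =>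
    Set.disjoint_left.1 (hdisj hne) hx₂ hx
  have huA' : ∀ x l', x ∈ A' l' → ∀ l₂, l₂ ≠ l' → x ∉ A' l₂ := fun x l' hx l₂ hne hx₂ =>
    Set.disjoint_left.1 (hdisj' hne) hx₂ hx
  -- pointwise values of sm, sm'
  have hsmA : ∀ l, ∀ x ∈ A l, sm x = Real.sqrt d * c l := by
    intro l x hx
    have h1 : ∀ l₂, l₂ ≠ l → c l₂ * ψ l₂ x = 0 := by
      intro l₂ hne
      have h2 : ψ l₂ x = 0 := by
        show Real.sqrt (d:ℝ) * (A l₂).indicator (fun _ => (1:ℝ)) x = 0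
        rw [Set.indicator_of_notMem (huA x l hx l₂ hne), mul_zero]
      rw [h2, mul_zero]
    have h2 : sm x = c l * ψ l x := tsum_eq_single l h1
    rw [h2]
    show c l * (Real.sqrt (d:ℝ) * (A l).indicator (fun _ => (1:ℝ)) x) = _
    rw [Set.indicator_of_mem hx]; ring
  have hsmA' : ∀ l', ∀ x ∈ A' l', sm' x = Real.sqrt (v' l')⁻¹ * c' l' := by
    intro l' x hx
    have h1 : ∀ l₂, l₂ ≠ l' → c' l₂ * ψ' l₂ x = 0 := by
      intro l₂ hne
      have h2 : ψ' l₂ x = 0 := by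
        show Real.sqrt ((volume (A' l₂)).toReal)⁻¹ * (A' l₂).indicator (fun _ => (1:ℝ)) x = 0
        rw [Set.indicator_of_notMem (huA' x l' hx l₂ hne), mul_zero]
      rw [h2, mul_zero]
    have h2 : sm' x = c' l' * ψ' l' x := tsum_eq_single l' h1
    rw [h2]
    show c' l' * (Real.sqrt ((volume (A' l')).toReal)⁻¹ * (A' l').indicator (fun _ => (1:ℝ)) x) = _
    rw [Set.indicator_of_mem hx]; ring
  -- measurability and boundedness of sm, sm'
  have hsmM : Measurable sm :=
    measurable_of_partition hA hcover (g := fun l => Real.sqrt d * c l) hsmA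
  have hsm'M : Measurable sm' :=
    measurable_of_partition hA' hcover' (g := fun l' => Real.sqrt (v' l')⁻¹ * c' l') hsmA'
  have hsmB : ∀ x, ‖sm x‖ ≤ C := by
    intro x
    obtain ⟨l, hl⟩ := Set.mem_iUnion.1 (hcover ▸ Set.mem_univ x)
    rw [hsmA l x hl, Real.norm_eq_abs,
      abs_of_nonneg (mul_nonneg (Real.sqrt_nonneg _) (hc0 l))]
    exact hcC l
  have hsm'B : ∀ x, ‖sm' x‖ ≤ C := by
    intro x
    obtain ⟨l', hl'⟩ := Set.mem_iUnion.1 (hcover' ▸ Set.mem_univ x)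
    rw [hsmA' l' x hl', Real.norm_eq_abs,
      abs_of_nonneg (mul_nonneg (Real.sqrt_nonneg _) (hc'0 l'))]
    exact hc'C l'
  -- integrability of sm * sm' * s
  have hI1 : Integrable (fun x => sm' x * s x) :=
    hsI.bdd_mul hsm'M.aestronglyMeasurable (ae_of_all _ hsm'B)
  have hI2 : Integrable (fun x => sm x * (sm' x * s x)) :=
    hI1.bdd_mul hsmM.aestronglyMeasurable (ae_of_all _ hsmB)
  have hIsms : Integrable (fun x => sm x * sm' x * s x) := by
    have h2 : (fun x => sm x * sm' x * s x) = fun x => sm x * (sm' x * s x) := by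
      funext x; ring
    rw [h2]; exact hI2
  -- the refinement choice map
  set l₀ : Λ' → Λ := fun l' => (hrefine l').choose with hl₀def
  have hl₀ : ∀ l', A' l' ⊆ A (l₀ l') := fun l' => (hrefine l').choose_spec
  -- computation of the middle integral
  have hPd : (∫ x, sm x * sm' x * s x) = ∑' l', Real.sqrt d * c (l₀ l') * c' l' ^ 2 := by
    rw [← setIntegral_univ, ← hcover',
      integral_iUnion hA' hdisj' (by rw [hcover']; exact hIsms.integrableOn)]
    refine tsum_congr fun l' => ?_
    have hcongr : ∀ x ∈ A' l', sm x * sm' x * s x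
        = (Real.sqrt d * c (l₀ l') * (Real.sqrt (v' l')⁻¹ * c' l')) * s x := by
      intro x hx
      rw [hsmA (l₀ l') x (hl₀ l' hx), hsmA' l' x hx]
    rw [setIntegral_congr_fun (hA' l') hcongr, integral_const_mul]
    have h4 : Real.sqrt (v' l')⁻¹ * e' l' = c' l' := (hc'e l').symm
    have h5 : (∫ x in A' l', s x) = e' l' := rfl
    rw [h5]
    calc (Real.sqrt d * c (l₀ l') * (Real.sqrt (v' l')⁻¹ * c' l')) * e' l'
        = (Real.sqrt d * c (l₀ l') * c' l') * (Real.sqrt (v' l')⁻¹ * e' l') := by ring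
      _ = Real.sqrt d * c (l₀ l') * c' l' ^ 2 := by rw [h4]; ring
  -- the cross moments b
  set b : Λ × Λ' → ℝ := fun p => ∫ x, ψ p.1 x * ψ' p.2 x * s x with hbdef
  have hψM : ∀ l, Measurable (ψ l) := fun l =>
    (measurable_const.indicator (hA l)).const_mul _
  have hψ'M : ∀ l', Measurable (ψ' l') := fun l' =>
    (measurable_const.indicator (hA' l')).const_mul _
  have hψB : ∀ l x, ‖ψ l x‖ ≤ Real.sqrt d := by
    intro l x
    show ‖Real.sqrt (d:ℝ) * (A l).indicator (fun _ => (1:ℝ)) x‖ ≤ Real.sqrt d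
    by_cases hx : x ∈ A l
    · rw [Set.indicator_of_mem hx, mul_one, Real.norm_eq_abs,
        abs_of_nonneg (Real.sqrt_nonneg _)]
    · rw [Set.indicator_of_notMem hx, mul_zero, norm_zero]
      exact Real.sqrt_nonneg _
  have hψ'B : ∀ l' x, ‖ψ' l' x‖ ≤ Real.sqrt (v' l')⁻¹ := by
    intro l' x
    show ‖Real.sqrt ((volume (A' l')).toReal)⁻¹ * (A' l').indicator (fun _ => (1:ℝ)) x‖
      ≤ Real.sqrt (v' l')⁻¹
    by_cases hx : x ∈ A' l'
    · rw [Set.indicator_of_mem hx, mul_one, Real.norm_eq_abs,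
        abs_of_nonneg (Real.sqrt_nonneg _)]
    · rw [Set.indicator_of_notMem hx, mul_zero, norm_zero]
      exact Real.sqrt_nonneg _
  have hIψ's : ∀ l', Integrable (fun x => ψ' l' x * s x) := fun l' =>
    hsI.bdd_mul (hψ'M l').aestronglyMeasurable (ae_of_all _ (hψ'B l'))
  have hIψs : ∀ l, Integrable (fun x => ψ l x * s x) := fun l =>
    hsI.bdd_mul (hψM l).aestronglyMeasurable (ae_of_all _ (hψB l))
  have hIψψ's : ∀ l l', Integrable (fun x => ψ l x * (ψ' l' x * s x)) := fun l l' =>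
    (hIψ's l').bdd_mul (hψM l).aestronglyMeasurable (ae_of_all _ (hψB l))
  -- expansion of the covariance
  have hab : ∀ p : Λ × Λ',
      (∫ x, (ψ p.1 x - c p.1) * (ψ' p.2 x - c' p.2) * s x) = b p - c p.1 * c' p.2 := by
    rintro ⟨l, l'⟩
    have hexp : (fun x => (ψ l x - c l) * (ψ' l' x - c' l') * s x)
        = fun x => (ψ l x * (ψ' l' x * s x) - c l * (ψ' l' x * s x))
            - (c' l' * (ψ l x * s x) - (c l * c' l') * s x) := by
      funext x; ring
    have i12 : (∫ x, (ψ l x * (ψ' l' x * s x) - c l * (ψ' l' x * s x)))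
        = (∫ x, ψ l x * (ψ' l' x * s x)) - ∫ x, c l * (ψ' l' x * s x) :=
      integral_sub (hIψψ's l l') ((hIψ's l').const_mul _)
    have i34 : (∫ x, (c' l' * (ψ l x * s x) - (c l * c' l') * s x))
        = (∫ x, c' l' * (ψ l x * s x)) - ∫ x, (c l * c' l') * s x :=
      integral_sub ((hIψs l).const_mul _) (hsI.const_mul _)
    have itot : (∫ x, ((ψ l x * (ψ' l' x * s x) - c l * (ψ' l' x * s x))
          - (c' l' * (ψ l x * s x) - (c l * c' l') * s x)))
        = (∫ x, (ψ l x * (ψ' l' x * s x) - c l * (ψ' l' x * s x)))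
          - ∫ x, (c' l' * (ψ l x * s x) - (c l * c' l') * s x) :=
      integral_sub ((hIψψ's l l').sub ((hIψ's l').const_mul _))
        (((hIψs l).const_mul _).sub (hsI.const_mul _))
    show (∫ x, (ψ l x - c l) * (ψ' l' x - c' l') * s x) = _
    rw [hexp, itot, i12, i34,
      integral_const_mul, integral_const_mul, integral_const_mul, hs1]
    have hbv : (∫ x, ψ l x * (ψ' l' x * s x)) = b (l, l') := by
      show _ = ∫ x, ψ l x * ψ' l' x * s x
      congr 1; funext x; ring
    have hcv : (∫ x, ψ l x * s x) = c l := rfl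
    have hc'v : (∫ x, ψ' l' x * s x) = c' l' := rfl
    rw [hbv, hcv, hc'v]
    ring
  -- values of b
  have hb0 : ∀ p : Λ × Λ', p.1 ≠ l₀ p.2 → b p = 0 := by
    rintro ⟨l, l'⟩ hne
    have hz : ∀ x, ψ l x * ψ' l' x * s x = 0 := by
      intro x
      by_cases hx : x ∈ A' l'
      · have hxA : x ∉ A l := huA x (l₀ l') (hl₀ l' hx) l hne
        show Real.sqrt (d:ℝ) * (A l).indicator (fun _ => (1:ℝ)) x * ψ' l' x * s x = 0
        rw [Set.indicator_of_notMem hxA]; ring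
      · show ψ l x * (Real.sqrt ((volume (A' l')).toReal)⁻¹
            * (A' l').indicator (fun _ => (1:ℝ)) x) * s x = 0
        rw [Set.indicator_of_notMem hx]; ring
    show (∫ x, ψ l x * ψ' l' x * s x) = 0
    simp only [hz, integral_zero]
  have hbι : ∀ l', b (l₀ l', l') = Real.sqrt d * c' l' := by
    intro l'
    have hz : ∀ x, ψ (l₀ l') x * ψ' l' x * s x = Real.sqrt d * (ψ' l' x * s x) := by
      intro x
      by_cases hx : x ∈ A' l'
      · have hxA : x ∈ A (l₀ l') := hl₀ l' hx
        show Real.sqrt (d:ℝ) * (A (l₀ l')).indicator (fun _ => (1:ℝ)) x * ψ' l' x * s x = _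
        rw [Set.indicator_of_mem hxA]; ring
      · show ψ (l₀ l') x * (Real.sqrt ((volume (A' l')).toReal)⁻¹
            * (A' l').indicator (fun _ => (1:ℝ)) x) * s x
          = Real.sqrt (d:ℝ) * ((Real.sqrt ((volume (A' l')).toReal)⁻¹
            * (A' l').indicator (fun _ => (1:ℝ)) x) * s x)
        rw [Set.indicator_of_notMem hx]; ring
    show (∫ x, ψ (l₀ l') x * ψ' l' x * s x) = _
    simp only [hz]
    rw [integral_const_mul]
  -- the injection ι
  set ι : Λ' → Λ × Λ' := fun l' => (l₀ l', l') with hιdef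
  have hιinj : Function.Injective ι := fun a b h => congrArg Prod.snd h
  have hrange : ∀ p : Λ × Λ', p ∉ Set.range ι → b p = 0 := by
    rintro ⟨l, l'⟩ hp
    refine hb0 _ fun h => hp ⟨l', ?_⟩
    show (l₀ l', l') = (l, l')
    rw [show l = l₀ l' from h]
  -- summabilities over the product
  have hSb2 : Summable (fun p : Λ × Λ' => b p ^ 2) := by
    refine (Function.Injective.summable_iff hιinj fun p hp => by
      rw [hrange p hp]; exact zero_pow two_ne_zero).1 ?_
    have hcomp : ((fun p : Λ × Λ' => b p ^ 2) ∘ ι) = fun l' => (d:ℝ) * c' l' ^ 2 := by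
      funext l'
      show b (l₀ l', l') ^ 2 = _
      rw [hbι l', mul_pow, Real.sq_sqrt hdR.le]
    rw [hcomp]
    exact hSc'2.mul_left _
  have hSbcc : Summable (fun p : Λ × Λ' => b p * (c p.1 * c' p.2)) := by
    refine (Function.Injective.summable_iff hιinj fun p hp => by
      rw [hrange p hp, zero_mul]).1 ?_
    have hcomp : ((fun p : Λ × Λ' => b p * (c p.1 * c' p.2)) ∘ ι)
        = fun l' => Real.sqrt d * c' l' * (c (l₀ l') * c' l') := by
      funext l'
      show b (l₀ l', l') * (c (l₀ l') * c' l') = _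
      rw [hbι l']
    rw [hcomp]
    refine Summable.of_nonneg_of_le (fun l' => ?_) (fun l' => ?_) (hSc'2.mul_left C)
    · exact mul_nonneg (mul_nonneg (Real.sqrt_nonneg _) (hc'0 l'))
        (mul_nonneg (hc0 _) (hc'0 l'))
    · calc Real.sqrt d * c' l' * (c (l₀ l') * c' l')
          = (Real.sqrt d * c (l₀ l')) * c' l' ^ 2 := by ring
        _ ≤ C * c' l' ^ 2 := mul_le_mul_of_nonneg_right (hcC _) (sq_nonneg _)
  have hScc : Summable (fun p : Λ × Λ' => c p.1 ^ 2 * c' p.2 ^ 2) :=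
    hSc2.mul_of_nonneg hSc'2 (fun l => sq_nonneg _) (fun l' => sq_nonneg _)
  -- values of the product tsums
  have hT2 : (∑' p : Λ × Λ', b p ^ 2) = (d:ℝ) * ∑' l', c' l' ^ 2 := by
    rw [← Function.Injective.tsum_eq hιinj (f := fun p : Λ × Λ' => b p ^ 2)
      (fun p hp => by
        by_contra hnr
        exact hp (show b p ^ 2 = 0 by rw [hrange p hnr]; exact zero_pow two_ne_zero))]
    rw [show (fun l' => b (ι l') ^ 2) = fun l' => (d:ℝ) * c' l' ^ 2 from funext fun l' => by
      show b (l₀ l', l') ^ 2 = _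
      rw [hbι l', mul_pow, Real.sq_sqrt hdR.le]]
    exact tsum_mul_left
  have hT1 : (∑' p : Λ × Λ', b p * (c p.1 * c' p.2))
      = ∑' l', Real.sqrt d * c (l₀ l') * c' l' ^ 2 := by
    rw [← Function.Injective.tsum_eq hιinj
      (f := fun p : Λ × Λ' => b p * (c p.1 * c' p.2))
      (fun p hp => by
        by_contra hnr
        exact hp (show b p * (c p.1 * c' p.2) = 0 by rw [hrange p hnr, zero_mul]))]
    refine tsum_congr fun l' => ?_
    show b (l₀ l', l') * (c (l₀ l') * c' l') = _
    rw [hbι l']; ring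
  have hT3 : (∑' p : Λ × Λ', c p.1 ^ 2 * c' p.2 ^ 2)
      = (∑' l, c l ^ 2) * (∑' l', c' l' ^ 2) :=
    (Summable.tsum_mul_tsum hSc2 hSc'2 hScc).symm
  -- final assembly
  calc (∑' p : Λ × Λ', (∫ x, (ψ p.1 x - c p.1) * (ψ' p.2 x - c' p.2) * s x) ^ 2)
      = ∑' p : Λ × Λ', ((b p ^ 2 - 2 * (b p * (c p.1 * c' p.2)))
        + c p.1 ^ 2 * c' p.2 ^ 2) := by
        refine tsum_congr fun p => ?_
        rw [hab p]; ring
    _ = (∑' p : Λ × Λ', (b p ^ 2 - 2 * (b p * (c p.1 * c' p.2))))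
        + ∑' p : Λ × Λ', c p.1 ^ 2 * c' p.2 ^ 2 :=
      Summable.tsum_add (hSb2.sub (hSbcc.mul_left 2)) hScc
    _ = ((∑' p : Λ × Λ', b p ^ 2) - ∑' p : Λ × Λ', 2 * (b p * (c p.1 * c' p.2)))
        + ∑' p : Λ × Λ', c p.1 ^ 2 * c' p.2 ^ 2 := by
      rw [Summable.tsum_sub hSb2 (hSbcc.mul_left 2)]
    _ = ((d:ℝ) * ∑' l', c' l' ^ 2)
        - 2 * (∑' l', Real.sqrt d * c (l₀ l') * c' l' ^ 2)
        + (∑' l, c l ^ 2) * (∑' l', c' l' ^ 2) := by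
      rw [hT2, hT3, tsum_mul_left, hT1]
    _ = (d:ℝ) * (∑' l, c' l ^ 2) - 2 * (∫ x, sm x * sm' x * s x)
        + (∑' l, c l ^ 2) * (∑' l, c' l ^ 2) := by rw [hPd]
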